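/- Let x : ℤ → ℝ satisfy x(i) > 0 and x(i−1)·x(i+1) = x(i)² + 1 for all i ∈ ℤ. Then for every j ∈ ℤ and every integer i ≥ 1: x(j+i) + x(j−i) > 2·x(j), and x(j+i+1) + x(j−i−1) > x(j+i) + x(j−i). (Equivalently, at any totally positive point of the rank-2 (2,2) cluster algebra the values of the elements t_i satisfy 2 < t₁ < t₂ < t₃ < ⋯.) -/

import Mathlib

/-- For a positive solution of the rank-2 `(2,2)` cluster recurrence, the
values of the elements `t i` satisfy `2 < t 1 < t 2 < t 3 < ⋯`:
for all `i ≥ 1`, `x (j+i) + x (j-i) > 2 * x j` and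
`x (j+i+1) + x (j-i-1) > x (j+i) + x (j-i)`. -/
theorem rank2_22_t_strict_mono (x : ℤ → ℝ)
    (hpos : ∀ i : ℤ, 0 < x i)
    (hrec : ∀ i : ℤ, x (i - 1) * x (i + 1) = x i ^ 2 + 1) :
    ∀ (j i : ℤ), 1 ≤ i →
      2 * x j < x (j + i) + x (j - i) ∧
      x (j + i) + x (j - i) < x (j + i + 1) + x (j - i - 1) := by
  have hne : ∀ k : ℤ, x k ≠ 0 := fun k => (hpos k).ne'
  have key : ∀ k : ℤ, x k * (x (k + 2) + x k) = x (k + 1) * (x (k + 1) + x (k - 1)) := by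
    intro k
    have h1 := hrec k
    have h2 := hrec (k + 1)
    ring_nf at h1 h2 ⊢
    nlinarith [h1, h2]
  obtain ⟨c, hc_def⟩ : ∃ c : ℝ, c = (x 1 + x (-1)) / x 0 := ⟨_, rfl⟩
  have hc' : ∀ k : ℤ, (x (k + 1) + x (k - 1)) * x 0 = (x 1 + x (-1)) * x k := by
    intro k
    induction k using Int.induction_on with
    | zero => norm_num
    | succ k ih =>
        have hk := key k
        have h0 := hne k
        apply mul_right_cancel₀ h0
        ring_nf
        ring_nf at hk ih
        linear_combination x 0 * hk + x (1 + (k:ℤ)) * ih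
    | pred k ih =>
        have hk := key (-(k:ℤ) - 1)
        have h0 := hne (-k)
        apply mul_right_cancel₀ h0
        ring_nf
        ring_nf at hk ih
        linear_combination x (-1 - (k:ℤ)) * ih - x 0 * hk
  have hc : ∀ k : ℤ, x (k + 1) + x (k - 1) = c * x k := by
    intro k
    rw [hc_def, div_mul_eq_mul_div, eq_div_iff (hne 0)]
    exact hc' k
  have h0 := hrec 0
  norm_num at h0
  have hc2 : 2 < c := by
    rw [hc_def, lt_div_iff₀ (hpos 0)]
    nlinarith [sq_nonneg (x 1 - x (-1)), hpos 0, hpos 1, hpos (-1)]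
  intro j
  have step : ∀ n : ℕ, x (j + (n:ℤ)) + x (j - (n:ℤ))
      < x (j + ((n:ℤ) + 1)) + x (j - ((n:ℤ) + 1)) := by
    intro n
    induction n with
    | zero =>
        have h := hc j
        have e1 : j + 1 - 1 = j := by ring
        push_cast
        ring_nf at h ⊢
        nlinarith [h, hc2, hpos j, mul_pos (by linarith : (0:ℝ) < c - 2) (hpos j)]
    | succ n ih =>
        have h1 := hc (j + (n:ℤ) + 1)
        have h2 := hc (j - (n:ℤ) - 1)
        have hprod : 0 < (c - 2) * (x (j + (n:ℤ) + 1) + x (j - (n:ℤ) - 1)) :=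
          mul_pos (by linarith) (by have := hpos (j + (n:ℤ) + 1); have := hpos (j - (n:ℤ) - 1); linarith)
        push_cast
        ring_nf at h1 h2 ih hprod ⊢
        linarith [h1, h2, ih, hprod]
  have hmono : ∀ n : ℕ, 2 * x j < x (j + ((n:ℤ) + 1)) + x (j - ((n:ℤ) + 1)) := by
    intro n
    induction n with
    | zero =>
        have h := hc j
        push_cast
        ring_nf at h ⊢
        nlinarith [h, hc2, hpos j, mul_pos (by linarith : (0:ℝ) < c - 2) (hpos j)]
    | succ n ih =>
        have hs := step (n + 1)
        push_cast at hs ⊢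
        ring_nf at hs ih ⊢
        linarith [hs, ih]
  intro i hi
  obtain ⟨n, rfl⟩ : ∃ n : ℕ, i = (n : ℤ) + 1 := ⟨(i - 1).toNat, by omega⟩
  constructor
  · exact hmono n
  · have hs := step (n + 1)
    push_cast at hs
    ring_nf at hs ⊢
    linarith [hs]
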